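/- Let H be an m×n matrix over F₂ with rank r. Then the hypergraph product code Q = HGP(H, Hᵀ), defined on n² + m² qubits with check matrices H_Z = [H⊗I_n , I_m⊗Hᵀ] and H_X = [I_n⊗H , Hᵀ⊗I_m], satisfies: (a) H_X · H_Zᵀ = 0, and (b) the number of logical qubits is (n²+m²) − rank(H_X) − rank(H_Z) = (n−r)² + (m−r)². -/

import Mathlib

open Matrix Kronecker Module

set_option linter.unusedSectionVars false

section Aux
variable {K : Type*} [Field K] {m n n' : Type*} [Fintype m] [Fintype n] [Fintype n']
  [DecidableEq m] [DecidableEq n] [DecidableEq n']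

def colRowSub (C : Submodule K (m → K)) (R : Submodule K (n → K)) :
    Submodule K (m × n → K) where
  carrier := {v | (∀ j, (fun i => v (i, j)) ∈ C) ∧ (∀ i, (fun j => v (i, j)) ∈ R)}
  add_mem' := by
    rintro a b ⟨ha1, ha2⟩ ⟨hb1, hb2⟩
    exact ⟨fun j => C.add_mem (ha1 j) (hb1 j), fun i => R.add_mem (ha2 i) (hb2 i)⟩
  zero_mem' := ⟨fun j => C.zero_mem, fun i => R.zero_mem⟩
  smul_mem' := by
    rintro c a ⟨ha1, ha2⟩
    exact ⟨fun j => C.smul_mem c (ha1 j), fun i => R.smul_mem c (ha2 i)⟩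

lemma mem_colRowSub {C : Submodule K (m → K)} {R : Submodule K (n → K)}
    {v : m × n → K} : v ∈ colRowSub C R ↔
      (∀ j, (fun i => v (i, j)) ∈ C) ∧ (∀ i, (fun j => v (i, j)) ∈ R) := Iff.rfl

lemma finrank_colRowSub (C : Submodule K (m → K)) (R : Submodule K (n → K)) :
    finrank K (colRowSub C R) = finrank K C * finrank K R := by
  classical
  set r := finrank K C with hrdef
  let b : Basis (Fin r) K C := finBasis K C
  -- extend the coordinate functionals of `b` to all of `m → K`
  have hφ : ∀ k : Fin r, ∃ g : (m → K) →ₗ[K] K, g.comp C.subtype = b.coord k :=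
    fun k => LinearMap.exists_extend _
  choose φ hφ using hφ
  have hφ' : ∀ (k : Fin r) (c : C), φ k (c : m → K) = b.repr c k := by
    intro k c
    have := congrArg (fun f => f c) (hφ k)
    simpa [Basis.coord_apply] using this
  -- key fact : for v with all columns in C, the "k-th coordinate row" lies in R
  -- forward map
  have hrowmem : ∀ (v : m × n → K) (_ : v ∈ colRowSub C R) (k : Fin r),
      (fun j => φ k (fun i => v (i, j))) ∈ R := by
    intro v hv k
    have : (fun j => φ k (fun i => v (i, j)))
        = ∑ i : m, φ k (Pi.single i 1) • (fun j => v (i, j)) := by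
      funext j
      have hcol : (fun i => v (i, j)) = ∑ i : m, v (i, j) • (Pi.single i 1 : m → K) := by
        funext i'
        simp [Finset.sum_apply, Pi.single_apply]
      rw [hcol, map_sum]
      simp [Finset.sum_apply, mul_comm]
    rw [this]
    exact Submodule.sum_mem _ fun i _ => R.smul_mem _ ((mem_colRowSub.mp hv).2 i)
  let f : colRowSub C R →ₗ[K] (Fin r → R) :=
    { toFun := fun v k => ⟨fun j => φ k (fun i => (v : m × n → K) (i, j)),
        hrowmem v v.2 k⟩
      map_add' := by
        intro v w
        funext k
        ext j
        simp only [Submodule.coe_add, Pi.add_apply]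
        rw [show (fun i => (v : m × n → K) (i, j) + (w : m × n → K) (i, j))
          = (fun i => (v : m × n → K) (i, j)) + (fun i => (w : m × n → K) (i, j)) from rfl,
          map_add]
      map_smul' := by
        intro c v
        funext k
        ext j
        simp only [Submodule.coe_smul, Pi.smul_apply, RingHom.id_apply, smul_eq_mul]
        rw [show (fun i => c * (v : m × n → K) (i, j))
          = c • (fun i => (v : m × n → K) (i, j)) from rfl, LinearMap.map_smul]
        simp }
  let g : (Fin r → R) →ₗ[K] colRowSub C R :=
    { toFun := fun x => ⟨fun p => ∑ k : Fin r, (b k : m → K) p.1 * (x k : n → K) p.2, by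
        refine mem_colRowSub.mpr ⟨fun j => ?_, fun i => ?_⟩
        · have : (fun i => ∑ k : Fin r, (b k : m → K) i * (x k : n → K) j)
              = ∑ k : Fin r, ((x k : n → K) j) • (b k : m → K) := by
            funext i; simp [Finset.sum_apply, mul_comm]
          rw [this]
          exact Submodule.sum_mem _ fun k _ => C.smul_mem _ (b k).2
        · have : (fun j => ∑ k : Fin r, (b k : m → K) i * (x k : n → K) j)
              = ∑ k : Fin r, ((b k : m → K) i) • (x k : n → K) := by
            funext j; simp [Finset.sum_apply]
          rw [this]
          exact Submodule.sum_mem _ fun k _ => R.smul_mem _ (x k).2⟩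
      map_add' := by
        intro x y; ext p
        simp [Finset.sum_add_distrib, mul_add]
      map_smul' := by
        intro c x; ext p
        simp [Finset.mul_sum, mul_left_comm] }
  have hgf : ∀ v, g (f v) = v := by
    intro v
    ext ⟨i, j⟩
    have hcolC : (fun i => (v : m × n → K) (i, j)) ∈ C := (mem_colRowSub.mp v.2).1 j
    show ∑ k : Fin r, (b k : m → K) i * φ k (fun i => (v : m × n → K) (i, j))
        = (v : m × n → K) (i, j)
    have : ∀ k : Fin r, φ k (fun i => (v : m × n → K) (i, j))
        = b.repr ⟨_, hcolC⟩ k := fun k => hφ' k ⟨_, hcolC⟩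
    simp_rw [this]
    have hsum := b.sum_repr ⟨fun i => (v : m × n → K) (i, j), hcolC⟩
    have := congrArg (fun c : C => (c : m → K) i) hsum
    beta_reduce at this
    rw [Submodule.coe_sum, Finset.sum_apply] at this
    simpa only [Submodule.coe_smul, Pi.smul_apply, smul_eq_mul, mul_comm] using this
  have hfg : ∀ x, f (g x) = x := by
    intro x
    funext k
    ext j
    show φ k (fun i => ∑ l : Fin r, (b l : m → K) i * (x l : n → K) j) = (x k : n → K) j
    have : (fun i => ∑ l : Fin r, (b l : m → K) i * (x l : n → K) j)
        = (((∑ l : Fin r, ((x l : n → K) j) • b l : C)) : m → K) := by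
      funext i
      simp [Finset.sum_apply, Submodule.coe_sum, mul_comm]
    rw [this, hφ', b.repr_sum_self]
  let e : colRowSub C R ≃ₗ[K] (Fin r → R) :=
    { f with invFun := g, left_inv := hgf, right_inv := hfg }
  rw [e.finrank_eq, Module.finrank_pi_fintype]
  simp [mul_comm]

lemma kron_one_mulVec (H : Matrix m n K) (x : n × n' → K) (i : m) (j : n') :
    ((H ⊗ₖ (1 : Matrix n' n' K)) *ᵥ x) (i, j) = (H *ᵥ fun a => x (a, j)) i := by
  simp only [mulVec, dotProduct, Fintype.sum_prod_type, kroneckerMap_apply, one_apply]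
  rw [Finset.sum_comm]
  simp [mul_ite, Finset.sum_ite_eq]

lemma one_kron_mulVec (A : Matrix n m K) (y : n' × m → K) (i : n') (j : n) :
    (((1 : Matrix n' n' K) ⊗ₖ A) *ᵥ y) (i, j) = (A *ᵥ fun d => y (i, d)) j := by
  simp only [mulVec, dotProduct, Fintype.sum_prod_type, kroneckerMap_apply, one_apply]
  simp [ite_mul, Finset.sum_ite_eq]

lemma range_kron_one (H : Matrix m n K) :
    LinearMap.range (H ⊗ₖ (1 : Matrix n' n' K)).mulVecLin
      = colRowSub (LinearMap.range H.mulVecLin) (⊤ : Submodule K (n' → K)) := by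
  ext v
  simp only [LinearMap.mem_range, mulVecLin_apply, mem_colRowSub, Submodule.mem_top]
  constructor
  · rintro ⟨x, rfl⟩
    exact ⟨fun j => ⟨fun a => x (a, j),
      by funext i; exact (kron_one_mulVec H x i j).symm⟩, fun _ => trivial⟩
  · rintro ⟨hv, -⟩
    refine ⟨fun p => (hv p.2).choose p.1, ?_⟩
    funext p
    obtain ⟨i, j⟩ := p
    rw [kron_one_mulVec]
    exact congrFun (hv j).choose_spec i
lemma range_one_kron (A : Matrix n m K) :
    LinearMap.range ((1 : Matrix n' n' K) ⊗ₖ A).mulVecLin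
      = colRowSub (⊤ : Submodule K (n' → K)) (LinearMap.range A.mulVecLin) := by
  ext v
  simp only [LinearMap.mem_range, mulVecLin_apply, mem_colRowSub, Submodule.mem_top]
  constructor
  · rintro ⟨y, rfl⟩
    exact ⟨fun _ => trivial, fun i => ⟨fun d => y (i, d),
      by funext j; exact (one_kron_mulVec A y i j).symm⟩⟩
  · rintro ⟨-, hv⟩
    refine ⟨fun p => (hv p.1).choose p.2, ?_⟩
    funext p
    obtain ⟨i, j⟩ := p
    rw [one_kron_mulVec]
    exact congrFun (hv i).choose_spec j

lemma range_fromColumns {o : Type*} [Fintype o] (A : Matrix m n K) (B : Matrix m o K) :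
    LinearMap.range (fromCols A B).mulVecLin
      = LinearMap.range A.mulVecLin ⊔ LinearMap.range B.mulVecLin := by
  ext w
  simp only [LinearMap.mem_range, mulVecLin_apply, Submodule.mem_sup]
  constructor
  · rintro ⟨x, rfl⟩
    refine ⟨A *ᵥ (x ∘ Sum.inl), ⟨_, rfl⟩, B *ᵥ (x ∘ Sum.inr), ⟨_, rfl⟩, ?_⟩
    rw [← fromCols_mulVec_sumElim, Sum.elim_comp_inl_inr]
  · rintro ⟨y, ⟨x₁, rfl⟩, z, ⟨x₂, rfl⟩, rfl⟩
    exact ⟨Sum.elim x₁ x₂, fromCols_mulVec_sumElim _ _ _ _⟩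

lemma colRowSub_inf (C : Submodule K (m → K)) (R : Submodule K (n → K)) :
    colRowSub C (⊤ : Submodule K (n → K)) ⊓ colRowSub (⊤ : Submodule K (m → K)) R
      = colRowSub C R := by
  ext v
  simp only [Submodule.mem_inf, mem_colRowSub, Submodule.mem_top]
  tauto

lemma rank_fromColumns_comm {o p : Type*} [Fintype o] [Fintype p] [DecidableEq o] [DecidableEq p]
    (A : Matrix m o K) (B : Matrix m p K) :
    (fromCols A B).rank = (fromCols B A).rank := by
  rw [Matrix.rank, Matrix.rank, range_fromColumns, range_fromColumns, sup_comm]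

lemma rank_hgp (H : Matrix m n K) :
    (fromCols (H ⊗ₖ (1 : Matrix n n K)) ((1 : Matrix m m K) ⊗ₖ Hᵀ)).rank
      + H.rank * H.rank = H.rank * Fintype.card n + Fintype.card m * H.rank := by
  rw [Matrix.rank, range_fromColumns, range_kron_one, range_one_kron]
  have h2 : H.rank * H.rank
      = finrank K ↥(colRowSub (LinearMap.range H.mulVecLin) (⊤ : Submodule K (n → K)) ⊓
          colRowSub (⊤ : Submodule K (m → K)) (LinearMap.range Hᵀ.mulVecLin)) := by
    rw [colRowSub_inf, finrank_colRowSub]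
    congr 1
    exact (rank_transpose H).symm
  rw [h2, Submodule.finrank_sup_add_finrank_inf_eq, finrank_colRowSub, finrank_colRowSub]
  rw [show finrank K ↥(LinearMap.range Hᵀ.mulVecLin) = H.rank from rank_transpose H]
  rw [finrank_top, finrank_top, Module.finrank_pi, Module.finrank_pi]
  rfl

end Aux

/-- Hypergraph product code `HGP(H, Hᵀ)`: with `H_Z = [H⊗Iₙ , I_m⊗Hᵀ]` and
`H_X = [Iₙ⊗H , Hᵀ⊗I_m]` over `F₂`, (a) the CSS condition `H_X · H_Zᵀ = 0` holds, and
(b) the number of logical qubits is `(n²+m²) − rank H_X − rank H_Z = (n−r)² + (m−r)²`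
where `r = rank H`. -/
theorem stmt_9 (m n r : ℕ) (H : Matrix (Fin m) (Fin n) (ZMod 2))
    (hr : H.rank = r)
    (HZ : Matrix (Fin m × Fin n) ((Fin n × Fin n) ⊕ (Fin m × Fin m)) (ZMod 2))
    (HX : Matrix (Fin n × Fin m) ((Fin n × Fin n) ⊕ (Fin m × Fin m)) (ZMod 2))
    (hHZ : HZ = Matrix.fromCols (H ⊗ₖ (1 : Matrix (Fin n) (Fin n) (ZMod 2)))
      ((1 : Matrix (Fin m) (Fin m) (ZMod 2)) ⊗ₖ Hᵀ))
    (hHX : HX = Matrix.fromCols ((1 : Matrix (Fin n) (Fin n) (ZMod 2)) ⊗ₖ H)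
      (Hᵀ ⊗ₖ (1 : Matrix (Fin m) (Fin m) (ZMod 2)))) :
    HX * HZᵀ = 0 ∧
      (n ^ 2 + m ^ 2) - HX.rank - HZ.rank = (n - r) ^ 2 + (m - r) ^ 2 := by
  subst hHZ hHX
  constructor
  · rw [transpose_fromCols, fromCols_mul_fromRows,
      ← kroneckerMap_transpose, ← kroneckerMap_transpose]
    simp only [transpose_one, transpose_transpose]
    rw [← mul_kronecker_mul, ← mul_kronecker_mul]
    rw [Matrix.one_mul, Matrix.mul_one, Matrix.mul_one, Matrix.one_mul]
    ext p q
    have : ∀ a : ZMod 2, a + a = 0 := by decide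
    simpa using this _
  · have hrn : r ≤ n := hr ▸ H.rank_le_width
    have hrm : r ≤ m := hr ▸ H.rank_le_height
    have e1 := rank_hgp (K := ZMod 2) H
    have e2 := rank_hgp (K := ZMod 2) Hᵀ
    rw [transpose_transpose, rank_transpose] at e2
    have e3 : (fromCols ((1 : Matrix (Fin n) (Fin n) (ZMod 2)) ⊗ₖ H)
          (Hᵀ ⊗ₖ (1 : Matrix (Fin m) (Fin m) (ZMod 2)))).rank
        = (fromCols (Hᵀ ⊗ₖ (1 : Matrix (Fin m) (Fin m) (ZMod 2)))
          ((1 : Matrix (Fin n) (Fin n) (ZMod 2)) ⊗ₖ H)).rank :=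
      rank_fromColumns_comm _ _
    rw [e3]
    simp only [Fintype.card_fin, hr] at e1 e2
    obtain ⟨a, rfl⟩ := Nat.exists_eq_add_of_le hrn
    obtain ⟨b, rfl⟩ := Nat.exists_eq_add_of_le hrm
    have hz : (fromCols (H ⊗ₖ (1 : Matrix (Fin (r + a)) (Fin (r + a)) (ZMod 2)))
        ((1 : Matrix (Fin (r + b)) (Fin (r + b)) (ZMod 2)) ⊗ₖ Hᵀ)).rank
        = r * a + r * b + r * r := by
      have : (r * a + r * b + r * r) + r * r = r * (r + a) + (r + b) * r := by ring
      omega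
    have hx : (fromCols (Hᵀ ⊗ₖ (1 : Matrix (Fin (r + b)) (Fin (r + b)) (ZMod 2)))
        ((1 : Matrix (Fin (r + a)) (Fin (r + a)) (ZMod 2)) ⊗ₖ H)).rank
        = r * a + r * b + r * r := by
      have : (r * a + r * b + r * r) + r * r = r * (r + b) + (r + a) * r := by ring
      omega
    rw [hz, hx]
    have h1 : r + a - r = a := by omega
    have h2 : r + b - r = b := by omega
    rw [h1, h2]
    have key : (r + a) ^ 2 + (r + b) ^ 2
        = a ^ 2 + b ^ 2 + (r * a + r * b + r * r) + (r * a + r * b + r * r) := by ring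
    rw [key, Nat.add_sub_cancel, Nat.add_sub_cancel]
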